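/- Let f : ℝ^n → ℝ be continuously differentiable, attain its minimum value f* at some point, and satisfy the Polyak–Łojasiewicz (PL) inequality with parameter μ > 0: (1/2)‖∇f(z)‖₂² ≥ μ(f(z) − f*) for all z ∈ ℝ^n. Let σ > 0, p ∈ [0,1), and let g : ℝ^n → ℝ^n satisfy ⟨g(y), y⟩ ≥ σ‖y‖₂^{1+p} for all y ∈ ℝ^n. If x : [0,∞) → ℝ^n is differentiable and x′(t) = −g(∇f(x(t))) for all t ≥ 0, then f(x(t)) = f* for all t ≥ T(x(0)), where T(x(0)) = (2μ(f(x(0)) − f*))^{(1−p)/2}/(μσ(1−p)); i.e. the flow converges to the set of minimizers in finite time. (Proposition 2.) -/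

import Mathlib

open scoped RealInnerProductSpace

/-- Proposition 2: finite-time convergence of the gradient flow under the
Polyak–Łojasiewicz inequality, with settling time depending on the initial state. -/
theorem ftgf_finite_time_convergence
    {n : ℕ} (f : EuclideanSpace ℝ (Fin n) → ℝ) (fstar μ σ p : ℝ)
    (hf : ContDiff ℝ 1 f)
    (hmin : ∃ z, f z = fstar) (hlb : ∀ z, fstar ≤ f z)
    (hμ : 0 < μ)
    (hPL : ∀ z, μ * (f z - fstar) ≤ (1/2) * ‖gradient f z‖ ^ 2)
    (hσ : 0 < σ) (hp : p ∈ Set.Ico (0:ℝ) 1)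
    (g : EuclideanSpace ℝ (Fin n) → EuclideanSpace ℝ (Fin n))
    (hg : ∀ y, σ * ‖y‖ ^ (1 + p) ≤ ⟪g y, y⟫)
    (x : ℝ → EuclideanSpace ℝ (Fin n))
    (hx : ∀ t ≥ (0:ℝ), HasDerivAt x (-(g (gradient f (x t)))) t) :
    ∀ t : ℝ, (2 * μ * (f (x 0) - fstar)) ^ ((1 - p)/2) / (μ * σ * (1 - p)) ≤ t →
      f (x t) = fstar := by
  obtain ⟨hp0, hp1⟩ := hp
  have hc0 : (0:ℝ) < (1 - p) / 2 := by linarith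
  have hq0 : (0:ℝ) < (1 + p) / 2 := by linarith
  set V : ℝ → ℝ := fun t => f (x t) - fstar with hVdef
  have hV0 : ∀ t, 0 ≤ V t := fun t => sub_nonneg.2 (hlb _)
  -- derivative of V
  have hVd : ∀ t, 0 ≤ t →
      HasDerivAt V (⟪gradient f (x t), -(g (gradient f (x t)))⟫) t := by
    intro t ht
    have hgrad : HasGradientAt f (gradient f (x t)) (x t) :=
      ((hf.differentiable one_ne_zero) (x t)).hasGradientAt
    have hcomp := hgrad.hasFDerivAt.comp_hasDerivAt t (hx t ht)
    have : HasDerivAt (fun s => f (x s)) (⟪gradient f (x t), -(g (gradient f (x t)))⟫) t := by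
      simpa [Function.comp_def, InnerProductSpace.toDual_apply_apply] using hcomp
    simpa [hVdef] using this.sub_const fstar
  -- the derivative bound
  have hbound : ∀ t, 0 ≤ t →
      ⟪gradient f (x t), -(g (gradient f (x t)))⟫ ≤ -σ * (2 * μ * V t) ^ ((1+p)/2) := by
    intro t ht
    set G := gradient f (x t) with hG
    have h1 : σ * ‖G‖ ^ (1 + p) ≤ ⟪g G, G⟫ := hg G
    have h2 : ⟪G, -(g G)⟫ = -⟪g G, G⟫ := by
      rw [inner_neg_right, real_inner_comm]
    have h3 : 2 * μ * V t ≤ ‖G‖ ^ (2:ℕ) := by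
      have h := hPL (x t)
      have hVt : V t = f (x t) - fstar := rfl
      nlinarith [h, hVt]
    have h4 : (2 * μ * V t) ^ ((1+p)/2) ≤ ‖G‖ ^ (1 + p) := by
      have hnn : 0 ≤ 2 * μ * V t := mul_nonneg (by positivity) (hV0 t)
      calc (2 * μ * V t) ^ ((1+p)/2) ≤ (‖G‖ ^ (2:ℕ)) ^ ((1+p)/2) :=
            Real.rpow_le_rpow hnn h3 (le_of_lt hq0)
        _ = ‖G‖ ^ (1 + p) := by
            rw [← Real.rpow_natCast ‖G‖ 2, ← Real.rpow_mul (norm_nonneg _)]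
            norm_num
            congr 1
            ring
    rw [h2]
    nlinarith [h1, h4]
  have hVd_nonpos : ∀ t, 0 ≤ t →
      ⟪gradient f (x t), -(g (gradient f (x t)))⟫ ≤ 0 := by
    intro t ht
    have h := hbound t ht
    have h5 : (0:ℝ) ≤ (2 * μ * V t) ^ ((1+p)/2) :=
      Real.rpow_nonneg (mul_nonneg (by positivity) (hV0 t)) _
    have : (0:ℝ) ≤ σ * (2 * μ * V t) ^ ((1+p)/2) := mul_nonneg (le_of_lt hσ) h5
    linarith
  -- V is continuous on [0, ∞) ... indeed differentiable there; for AntitoneOn we need more care: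
  -- V antitone on Ici 0
  have hVcont : ∀ t ∈ Set.Ici (0:ℝ), ContinuousWithinAt V (Set.Ici 0) t := by
    intro t ht
    exact ((hVd t ht).continuousAt).continuousWithinAt
  have hVanti : AntitoneOn V (Set.Ici 0) := by
    apply antitoneOn_of_deriv_nonpos (convex_Ici 0) (fun t ht => hVcont t ht)
    · intro t ht
      rw [interior_Ici] at ht
      exact (hVd t (le_of_lt ht)).differentiableAt.differentiableWithinAt
    · intro t ht
      rw [interior_Ici] at ht
      rw [(hVd t (le_of_lt ht)).deriv]
      exact hVd_nonpos t (le_of_lt ht)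
  -- main argument
  intro t hT
  have hTnn : (0:ℝ) ≤ (2 * μ * (f (x 0) - fstar)) ^ ((1 - p)/2) / (μ * σ * (1 - p)) := by
    have h1 : (0:ℝ) ≤ (2 * μ * (f (x 0) - fstar)) ^ ((1 - p)/2) := by
      have h0 : (0:ℝ) ≤ 2 * μ * (f (x 0) - fstar) :=
        mul_nonneg (by positivity) (hV0 0)
      exact Real.rpow_nonneg h0 _
    have h2 : (0:ℝ) < μ * σ * (1 - p) := mul_pos (mul_pos hμ hσ) (by linarith)
    positivity
  have ht0 : (0:ℝ) ≤ t := le_trans hTnn hT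
  -- case: exists a zero of V in [0, t]
  by_cases hzero : ∃ s ∈ Set.Icc (0:ℝ) t, V s = 0
  · obtain ⟨s, hs, hVs⟩ := hzero
    have hts : V t ≤ V s := hVanti hs.1 ht0 hs.2
    have hfin : V t = 0 := le_antisymm (by linarith) (hV0 t)
    simpa [hVdef, sub_eq_zero] using hfin
  · exfalso
    push_neg at hzero
    have hVpos : ∀ s ∈ Set.Icc (0:ℝ) t, 0 < V s := by
      intro s hs
      exact lt_of_le_of_ne (hV0 s) (fun h => hzero s hs h.symm)
    -- φ s = (2μ V s)^c + μσ(1-p) s antitone on [0,t]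
    set φ : ℝ → ℝ := fun s => (2 * μ * V s) ^ ((1-p)/2) + μ * σ * (1 - p) * s with hφdef
    have hφd : ∀ s ∈ Set.Icc (0:ℝ) t, HasDerivAt φ
        (⟪gradient f (x s), -(g (gradient f (x s)))⟫ * (2 * μ) * ((1-p)/2) *
          (2 * μ * V s) ^ ((1-p)/2 - 1) + μ * σ * (1 - p)) s := by
      intro s hs
      have hVds := (hVd s hs.1).const_mul (2 * μ)
      have hne : 2 * μ * V s ≠ 0 := ne_of_gt (by nlinarith [hVpos s hs])
      have h1 := (hVds.rpow_const (p := (1-p)/2) (Or.inl hne)).add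
        ((hasDerivAt_id s).const_mul (μ * σ * (1 - p)))
      simpa [hφdef, Pi.add_def, mul_comm, mul_assoc, mul_left_comm] using h1
    have hφanti : AntitoneOn φ (Set.Icc 0 t) := by
      apply antitoneOn_of_deriv_nonpos (convex_Icc 0 t)
      · intro s hs
        exact (hφd s hs).continuousAt.continuousWithinAt
      · intro s hs
        rw [interior_Icc] at hs
        exact (hφd s ⟨le_of_lt hs.1, le_of_lt hs.2⟩).differentiableAt.differentiableWithinAt
      · intro s hs
        rw [interior_Icc] at hs
        have hs' : s ∈ Set.Icc (0:ℝ) t := ⟨le_of_lt hs.1, le_of_lt hs.2⟩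
        rw [(hφd s hs').deriv]
        have hb := hbound s hs'.1
        have hApos : 0 < 2 * μ * V s := by nlinarith [hVpos s hs']
        have hpow_pos : (0:ℝ) < (2 * μ * V s) ^ ((1-p)/2 - 1) :=
          Real.rpow_pos_of_pos hApos _
        have hAq : (2 * μ * V s) ^ ((1+p)/2) * (2 * μ * V s) ^ ((1-p)/2 - 1) = 1 := by
          rw [← Real.rpow_add hApos,
            show (1+p)/2 + ((1-p)/2 - 1) = (0:ℝ) by ring, Real.rpow_zero]
        have hmono : ⟪gradient f (x s), -(g (gradient f (x s)))⟫ * (2 * μ) * ((1-p)/2) *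
              (2 * μ * V s) ^ ((1-p)/2 - 1)
            ≤ (-σ * (2 * μ * V s) ^ ((1+p)/2)) * (2 * μ) * ((1-p)/2) *
              (2 * μ * V s) ^ ((1-p)/2 - 1) := by
          apply mul_le_mul_of_nonneg_right _ (le_of_lt hpow_pos)
          apply mul_le_mul_of_nonneg_right _ (le_of_lt hc0)
          exact mul_le_mul_of_nonneg_right hb (by positivity)
        have heq : (-σ * (2 * μ * V s) ^ ((1+p)/2)) * (2 * μ) * ((1-p)/2) *
              (2 * μ * V s) ^ ((1-p)/2 - 1)
            = -(μ * σ * (1 - p)) * ((2 * μ * V s) ^ ((1+p)/2) *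
              (2 * μ * V s) ^ ((1-p)/2 - 1)) := by ring
        rw [heq, hAq, mul_one] at hmono
        linarith
    -- conclude contradiction
    have hden : (0:ℝ) < μ * σ * (1 - p) := mul_pos (mul_pos hμ hσ) (by linarith)
    have hφle : φ t ≤ φ 0 :=
      hφanti ⟨le_refl 0, ht0⟩ ⟨ht0, le_refl t⟩ ht0
    have hφ0 : φ 0 = (2 * μ * (f (x 0) - fstar)) ^ ((1-p)/2) := by
      simp [hφdef, hVdef]
    have hTle : (2 * μ * (f (x 0) - fstar)) ^ ((1-p)/2) ≤ μ * σ * (1 - p) * t := by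
      rw [div_le_iff₀ hden] at hT
      linarith [hT]
    have hVtpos : 0 < 2 * μ * V t := by nlinarith [hVpos t ⟨ht0, le_refl t⟩]
    have hpos : 0 < (2 * μ * V t) ^ ((1-p)/2) := Real.rpow_pos_of_pos hVtpos _
    have : (2 * μ * V t) ^ ((1-p)/2) + μ * σ * (1 - p) * t ≤ μ * σ * (1 - p) * t := by
      calc (2 * μ * V t) ^ ((1-p)/2) + μ * σ * (1 - p) * t = φ t := rfl
        _ ≤ φ 0 := hφle
        _ = (2 * μ * (f (x 0) - fstar)) ^ ((1-p)/2) := hφ0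
        _ ≤ μ * σ * (1 - p) * t := hTle
    linarith
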